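/- With the notation of the basic sequence: if c > 0 then λ(i) → +∞ as i → ∞; if c < 0 then λ(i) → −∞ as i → ∞. In particular, if c > 0, for every bound N there exists a time T with λ(T) > N. -/

import Mathlib

/-- Tape symbols: left endmarker, the unary letter, right endmarker. -/
inductive TapeSym : Type
  | lmark | a | rmark

/-- A linear subset of ℕᵏ. -/
def IsLinearSet' {k : ℕ} (S : Set (Fin k → ℕ)) : Prop :=
  ∃ (m : ℕ) (a : Fin k → ℕ) (b : Fin m → Fin k → ℕ),
    S = {v | ∃ c : Fin m → ℕ, v = a + ∑ j, c j • b j}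

/-- A semilinear (equivalently, Presburger-definable) subset of ℕᵏ. -/
def IsSemilinearSet' {k : ℕ} (S : Set (Fin k → ℕ)) : Prop :=
  ∃ (m : ℕ) (f : Fin m → Set (Fin k → ℕ)),
    (∀ i, IsLinearSet' (f i)) ∧ S = ⋃ i, f i

/-- Eventually periodic subset of ℕ. -/
def EventuallyPeriodic (L : Set ℕ) : Prop :=
  ∃ n₀ p : ℕ, 1 ≤ p ∧ ∀ n, n₀ ≤ n → (n ∈ L ↔ n + p ∈ L)

/-- The unary language {aⁿ : n ∈ L} is regular. -/
def UnaryRegular (L : Set ℕ) : Prop :=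
  ∃ (σ : Type) (_ : Fintype σ) (dfa : DFA Unit σ),
    ∀ n : ℕ, List.replicate n () ∈ dfa.accepts ↔ n ∈ L

/-- The symbol scanned at position `p` on the tape `{0, …, N+1}`. -/
def symAt (N : ℕ) (p : ℤ) : TapeSym :=
  if p ≤ 0 then TapeSym.lmark else if (N : ℤ) + 1 ≤ p then TapeSym.rmark else TapeSym.a

/-- One step of a deterministic two-way unary automaton on the tape `{0, …, N+1}`. -/
def tstep {Q : Type} (δ : Q → TapeSym → Q × ℤ) (N : ℕ) (c : Q × ℤ) : Q × ℤ :=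
  ((δ c.1 (symAt N c.2)).1, c.2 + (δ c.1 (symAt N c.2)).2)

/-- The run after `t` steps from configuration `(s, p)` on the tape `{0, …, N+1}`. -/
def trun {Q : Type} (δ : Q → TapeSym → Q × ℤ) (N : ℕ) (s : Q) (p : ℤ) (t : ℕ) : Q × ℤ :=
  (tstep δ N)^[t] (s, p)

/-- One step of the free run (two-way infinite unary tape, no endmarkers). -/
def freeStep {Q : Type} (δa : Q → Q × ℤ) (c : Q × ℤ) : Q × ℤ :=
  ((δa c.1).1, c.2 + (δa c.1).2)

/-- The free run from state `s` (displacement measured from the start). -/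
def freeRun {Q : Type} (δa : Q → Q × ℤ) (s : Q) (t : ℕ) : Q × ℤ :=
  (freeStep δa)^[t] (s, 0)

/-- The amplitude of a state `s`: the width of the range of displacements along
the first loop of its free run (which is contained in the first `|Q| + 1` steps). -/
noncomputable def amplitude {Q : Type} [Fintype Q] (δa : Q → Q × ℤ) (s : Q) : ℤ :=
  ((Finset.range (Fintype.card Q + 1)).image fun i => (freeRun δa s i).2).max'
      (by simp [Finset.nonempty_range_iff]) -
  ((Finset.range (Fintype.card Q + 1)).image fun i => (freeRun δa s i).2).min'
      (by simp [Finset.nonempty_range_iff])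


private lemma auxA (lam : ℕ → ℤ) (ℓ p : ℕ) (hp : 0 < p) (c : ℤ) (hc : 1 ≤ c)
    (hper : ∀ m, ℓ ≤ m → lam (m + p) = lam m + c) :
    Filter.Tendsto lam Filter.atTop Filter.atTop := by
  have key : ∀ n r, lam (ℓ + r + p * n) = lam (ℓ + r) + n * c := by
    intro n
    induction n with
    | zero => simp
    | succ n ih =>
      intro r
      have : ℓ + r + p * (n + 1) = (ℓ + r + p * n) + p := by ring
      rw [this, hper _ (by omega), ih r]
      push_cast; ring
  set M : ℤ := ((Finset.range p).image (fun r => lam (ℓ + r))).min'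
    (by simp [Finset.nonempty_range_iff]; omega) with hM
  have hMle : ∀ r, r < p → M ≤ lam (ℓ + r) := by
    intro r hr
    exact Finset.min'_le _ _ (Finset.mem_image.2 ⟨r, Finset.mem_range.2 hr, rfl⟩)
  have hbound : ∀ m, ℓ ≤ m → M + ((m - ℓ) / p : ℕ) * c ≤ lam m := by
    intro m hm
    have hmd : m = ℓ + (m - ℓ) % p + p * ((m - ℓ) / p) := by
      have := Nat.div_add_mod (m - ℓ) p
      omega
    have h1 := hMle _ (Nat.mod_lt (m - ℓ) hp)
    calc M + ((m - ℓ) / p : ℕ) * c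
        ≤ lam (ℓ + (m - ℓ) % p) + ((m - ℓ) / p : ℕ) * c := by omega
      _ = lam (ℓ + (m - ℓ) % p + p * ((m - ℓ) / p)) := (key _ _).symm
      _ = lam m := by rw [← hmd]
  rw [Filter.tendsto_atTop]
  intro b
  rw [Filter.eventually_atTop]
  refine ⟨ℓ + p * (b - M).toNat, fun m hm => ?_⟩
  have h1 : (b - M).toNat ≤ (m - ℓ) / p := by
    calc (b - M).toNat = p * (b - M).toNat / p := by rw [Nat.mul_div_cancel_left _ hp]
    _ ≤ (m - ℓ) / p := Nat.div_le_div_right (by omega)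
  have h2 := hbound m (by omega)
  have h3 : ((b - M).toNat : ℤ) ≤ ((m - ℓ) / p : ℕ) * c := by
    calc ((b - M).toNat : ℤ) ≤ ((m - ℓ) / p : ℕ) := by exact_mod_cast h1
    _ = ((m - ℓ) / p : ℕ) * 1 := by ring
    _ ≤ ((m - ℓ) / p : ℕ) * c := by
        apply mul_le_mul_of_nonneg_left hc (by positivity)
  have h4 : b - M ≤ ((b - M).toNat : ℤ) := Int.self_le_toNat _
  omega

/-- positive loop drift pushes the head to `+∞`, negative drift to `-∞`. -/
theorem stmt3 {Q : Type} [Fintype Q] (δ : Q → Q × ℤ)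
    (hδ : ∀ q, (δ q).2 = -1 ∨ (δ q).2 = 0 ∨ (δ q).2 = 1)
    (s : Q) (st : ℕ → Q) (h0 : st 0 = s) (hstep : ∀ i, st (i + 1) = (δ (st i)).1)
    (lam : ℕ → ℤ) (hlam : ∀ i, lam i = ∑ j ∈ Finset.range i, (δ (st j)).2)
    (ℓ k : ℕ) (hlk : ℓ < k) (hrep : st k = st ℓ)
    (hdist : ∀ i j, i < j → j < k → st i ≠ st j)
    (c : ℤ) (hc : c = lam k - lam ℓ) :
    (0 < c → Filter.Tendsto lam Filter.atTop Filter.atTop) ∧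
    (c < 0 → Filter.Tendsto lam Filter.atTop Filter.atBot) ∧
    (0 < c → ∀ N : ℤ, ∃ T : ℕ, N < lam T) := by
  set p := k - ℓ with hp
  have hp1 : 0 < p := by omega
  have hkp : k = ℓ + p := by omega
  have hstper : ∀ m, ℓ ≤ m → st (m + p) = st m := by
    intro m hm
    induction m, hm using Nat.le_induction with
    | base => rw [← hkp, hrep]
    | succ m hm ih =>
      have : m + 1 + p = (m + p) + 1 := by ring
      rw [this, hstep, hstep, ih]
  have hlstep : ∀ i, lam (i + 1) = lam i + (δ (st i)).2 := by
    intro i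
    rw [hlam, hlam, Finset.sum_range_succ]
  have hper : ∀ m, ℓ ≤ m → lam (m + p) = lam m + c := by
    intro m hm
    induction m, hm using Nat.le_induction with
    | base => rw [← hkp, hc]; ring
    | succ m hm ih =>
      have h1 : m + 1 + p = (m + p) + 1 := by ring
      rw [h1, hlstep, hlstep, hstper m hm, ih]; ring
  refine ⟨?_, ?_, ?_⟩
  · intro hcpos
    exact auxA lam ℓ p hp1 c (by omega) hper
  · intro hcneg
    have := auxA (fun m => -lam m) ℓ p hp1 (-c) (by omega)
      (fun m hm => by simp [hper m hm]; ring)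
    simpa using Filter.tendsto_neg_atBot_iff.mpr this
  · intro hcpos N
    have ht := auxA lam ℓ p hp1 c (by omega) hper
    obtain ⟨T, hT⟩ := (Filter.tendsto_atTop.mp ht (N + 1)).exists
    exact ⟨T, by omega⟩
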